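/- (Critical cones as tangential approximations) Let Q ⊂ ℝⁿ be Clarke regular at a point x̄ and let M be a locally minimal identifiable set (relative to Q) at x̄ for v̄ ∈ N_Q(x̄). Suppose additionally that M is prox-regular at x̄ for v̄ and smoothly derivable at x̄. Then the closed convex hull of the tangent cone T_M(x̄) equals the critical cone K_Q(x̄, v̄) := N_{N_Q(x̄)}(v̄). -/

import Mathlib

open Filter Topology Metric Set
open scoped RealInnerProductSpace

noncomputable section

/-- `ℝⁿ` with the Euclidean structure. -/
abbrev Euc (n : ℕ) : Type := EuclideanSpace ℝ (Fin n)

section Defs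

variable {H : Type*} [NormedAddCommGroup H] [InnerProductSpace ℝ H]
variable {H' : Type*} [NormedAddCommGroup H'] [InnerProductSpace ℝ H']

/-- The inclusion `M ⊆ Q` holds locally around the point `x`. -/
def LocallyIncl {α : Type*} [TopologicalSpace α] (M Q : Set α) (x : α) : Prop :=
  ∃ U ∈ 𝓝 x, M ∩ U ⊆ Q ∩ U

/-- The equality `M = Q` holds locally around the point `x`. -/
def LocallyEq {α : Type*} [TopologicalSpace α] (M Q : Set α) (x : α) : Prop :=
  ∃ U ∈ 𝓝 x, M ∩ U = Q ∩ U

/-- The graph of a set-valued mapping. -/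
def svGraph (G : H → Set H') : Set (H × H') := {p | p.2 ∈ G p.1}

/-- `G⁻¹(W)`, the preimage of a set `W` under the set-valued mapping `G`. -/
def svPreimage (G : H → Set H') (W : Set H') : Set H := {x | (G x ∩ W).Nonempty}

/-- `M` is identifiable relative to the set-valued mapping `G` at `x` for `v ∈ G x`:
the inclusion `gph G ⊆ M × H'` holds locally around `(x, v)`. -/
def IdentifiableRel (G : H → Set H') (M : Set H) (x : H) (v : H') : Prop :=
  LocallyIncl (svGraph G) (M ×ˢ (univ : Set H')) (x, v)

/-- `M` is necessary relative to `G` at `x` for `v ∈ G x`: `x ∈ M` and the function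
`y ↦ d(v, G y)`, restricted to `M`, is continuous at `x`. -/
def NecessaryRel (G : H → Set H') (M : Set H) (x : H) (v : H') : Prop :=
  x ∈ M ∧ ContinuousWithinAt (fun y => EMetric.infEdist v (G y)) M x

/-- `M` is a locally minimal identifiable set relative to `G` at `x` for `v`. -/
def LocallyMinimalIdentifiableRel (G : H → Set H') (M : Set H) (x : H) (v : H') : Prop :=
  IdentifiableRel G M x v ∧ ∀ M' : Set H, IdentifiableRel G M' x v → LocallyIncl M M' x

/-- `M` is a locally maximal necessary set relative to `G` at `x` for `v`. -/
def LocallyMaximalNecessaryRel (G : H → Set H') (M : Set H) (x : H) (v : H') : Prop :=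
  NecessaryRel G M x v ∧ ∀ M' : Set H, NecessaryRel G M' x v → LocallyIncl M' M x

/-- The proximal normal cone to `Q` at `x`. -/
def proxNormalCone (Q : Set H) (x : H) : Set H :=
  {v | x ∈ Q ∧ ∃ r > (0:ℝ), ∀ y ∈ Q, dist (x + r⁻¹ • v) x ≤ dist (x + r⁻¹ • v) y}

/-- The Fréchet normal cone to `Q` at `x`. -/
def frechetNormalCone (Q : Set H) (x : H) : Set H :=
  {v | x ∈ Q ∧ ∀ ε > (0:ℝ), ∃ δ > (0:ℝ), ∀ y ∈ Q, dist y x < δ → ⟪v, y - x⟫ ≤ ε * ‖y - x‖}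

/-- The limiting normal cone to `Q` at `x`. -/
def limitingNormalCone (Q : Set H) (x : H) : Set H :=
  {v | ∃ xs vs : ℕ → H, (∀ i, vs i ∈ frechetNormalCone Q (xs i)) ∧
        Tendsto xs atTop (𝓝 x) ∧ Tendsto vs atTop (𝓝 v)}

/-- `Q` is locally closed at `x`. -/
def LocallyClosedAt (Q : Set H) (x : H) : Prop :=
  ∃ ε > (0:ℝ), IsClosed (Q ∩ closedBall x ε)

/-- `x` is the unique nearest point of `S` to `p`. -/
def IsUniqueNearestPt (S : Set H) (p x : H) : Prop :=
  x ∈ S ∧ ∀ y ∈ S, y ≠ x → dist p x < dist p y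

/-- `Q` is prox-regular at `xb` for `vb`. -/
def ProxRegularAt (Q : Set H) (xb vb : H) : Prop :=
  LocallyClosedAt Q xb ∧ ∃ ε > (0:ℝ), ∃ r > (0:ℝ), ∀ x ∈ Q,
    ∀ v ∈ limitingNormalCone Q x, dist x xb < ε → dist v vb < ε →
      IsUniqueNearestPt (Q ∩ closedBall xb ε) (x + r⁻¹ • v) x

/-- `Q` is Clarke regular at `x`. -/
def ClarkeRegularAt (Q : Set H) (x : H) : Prop :=
  LocallyClosedAt Q x ∧ limitingNormalCone Q x = frechetNormalCone Q x

/-- `M` is identifiable relative to the set `Q` at `xb` for `vb ∈ N_Q(xb)`: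
the graph of the limiting normal cone mapping is contained in `M × H` locally
around `(xb, vb)`. -/
def IdentifiableIn (Q M : Set H) (xb vb : H) : Prop :=
  ∃ W ∈ 𝓝 (xb, vb), ∀ p : H × H, p ∈ W → p.1 ∈ Q → p.2 ∈ limitingNormalCone Q p.1 → p.1 ∈ M

/-- `M` is a locally minimal identifiable set relative to the set `Q` at `xb` for `vb`. -/
def LocallyMinimalIdentifiableIn (Q M : Set H) (xb vb : H) : Prop :=
  IdentifiableIn Q M xb vb ∧ ∀ M' : Set H, IdentifiableIn Q M' xb vb → LocallyIncl M M' xb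

/-- The (Bouligand) tangent cone to `Q` at `xb`. -/
def tangentConeB (Q : Set H) (xb : H) : Set H :=
  {w | ∃ (xs : ℕ → H) (ts : ℕ → ℝ), (∀ i, xs i ∈ Q) ∧ (∀ i, 0 < ts i) ∧
      Tendsto ts atTop (𝓝 0) ∧ Tendsto xs atTop (𝓝 xb) ∧
      Tendsto (fun i => (ts i)⁻¹ • (xs i - xb)) atTop (𝓝 w)}

/-- The set of nearest points of `Q` to `y`. -/
def nearestPts (Q : Set H) (y : H) : Set H := {z | z ∈ Q ∧ ∀ w ∈ Q, dist y z ≤ dist y w}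

/-- A tangent vector `w ∈ T_Q(xb)` is smoothly derivable. -/
def SmoothlyDerivableVec (Q : Set H) (xb w : H) : Prop :=
  ∃ ε > (0:ℝ), ∃ γ : ℝ → H, ContDiffOn ℝ 1 γ (Ico (0:ℝ) ε) ∧ γ 0 = xb ∧
    (∀ t ∈ Ico (0:ℝ) ε, γ t ∈ Q) ∧
    Tendsto (fun t => t⁻¹ • (γ t - xb)) (𝓝[>] (0:ℝ)) (𝓝 w)

/-- `Q` is smoothly derivable at `xb`: every tangent vector is smoothly derivable. -/
def SmoothlyDerivableAt (Q : Set H) (xb : H) : Prop :=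
  ∀ w ∈ tangentConeB Q xb, SmoothlyDerivableVec Q xb w

/-- The normal cone of convex analysis. -/
def convNormalCone (C : Set H) (x : H) : Set H := {v | ∀ y ∈ C, ⟪v, y - x⟫ ≤ 0}

/-- The tangent cone of convex analysis. -/
def convTangentCone (C : Set H) (x : H) : Set H :=
  closure {w | ∃ l : ℝ, 0 ≤ l ∧ ∃ y ∈ C, w = l • (y - x)}

/-- A convex polyhedron: a finite intersection of closed halfspaces. -/
def IsPolyhedron (Q : Set H) : Prop :=
  ∃ (k : ℕ) (a : Fin k → H) (b : Fin k → ℝ), Q = {x | ∀ i, ⟪a i, x⟫ ≤ b i}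

/-- The relative interior of a set: interior relative to its affine span. -/
def relInterior (S : Set H) : Set H :=
  {v | v ∈ S ∧ ∃ ε > (0:ℝ), ∀ y ∈ (affineSpan ℝ S : Set H), dist y v < ε → y ∈ S}

/-- Inner semicontinuity at `xb` of a set-valued map restricted to `S`. -/
def InnerSemicontinuousOnAt (T : H → Set H') (S : Set H) (xb : H) : Prop :=
  ∀ xs : ℕ → H, (∀ i, xs i ∈ S) → Tendsto xs atTop (𝓝 xb) →
    ∀ w ∈ T xb, ∃ ws : ℕ → H', (∀ i, ws i ∈ T (xs i)) ∧ Tendsto ws atTop (𝓝 w)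

/-- `M` is a `C²` submanifold of the ambient space around the point `xb`. -/
def IsC2SubmanifoldAround (M : Set H) (xb : H) : Prop :=
  ∃ (m : ℕ) (F : H → EuclideanSpace ℝ (Fin m)) (U : Set H), IsOpen U ∧ xb ∈ U ∧
    ContDiffOn ℝ 2 F U ∧ Function.Surjective (fderiv ℝ F xb) ∧
    M ∩ U = {x ∈ U | F x = 0}

/-- `Q` is partly smooth with respect to the manifold `M` at `xb` for `vb`. -/
def PartlySmoothAt (Q M : Set H) (xb vb : H) : Prop :=
  ProxRegularAt Q xb vb ∧
  (Submodule.span ℝ (frechetNormalCone Q xb) : Set H) = limitingNormalCone M xb ∧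
  ∃ V ∈ 𝓝 vb, InnerSemicontinuousOnAt (fun x => V ∩ limitingNormalCone Q x) M xb

/-- `ℝⁿ × ℝ` with the Euclidean (ℓ²) structure, hosting epigraphs. -/
abbrev PairL2 (H : Type*) [NormedAddCommGroup H] : Type _ := WithLp 2 (H × ℝ)

/-- Build a point of `PairL2 H` from its components. -/
def pmk (x : H) (r : ℝ) : PairL2 H := (WithLp.equiv 2 (H × ℝ)).symm (x, r)

/-- The epigraph of an extended-real-valued function. -/
def epigraph (f : H → EReal) : Set (PairL2 H) :=
  {p | f ((WithLp.equiv 2 (H × ℝ)) p).1 ≤ (((WithLp.equiv 2 (H × ℝ)) p).2 : EReal)}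

/-- The limiting subdifferential. -/
def limSubdiff (f : H → EReal) (x : H) : Set H :=
  {v | ∃ r : ℝ, f x = (r : EReal) ∧
      pmk v (-1) ∈ limitingNormalCone (epigraph f) (pmk x r)}

/-- The horizon subdifferential. -/
def horizonSubdiff (f : H → EReal) (x : H) : Set H :=
  {v | ∃ r : ℝ, f x = (r : EReal) ∧
      pmk v 0 ∈ limitingNormalCone (epigraph f) (pmk x r)}

/-- The proximal subdifferential. -/
def proxSubdiff (f : H → EReal) (x : H) : Set H :=
  {v | ∃ r : ℝ, f x = (r : EReal) ∧
      pmk v (-1) ∈ proxNormalCone (epigraph f) (pmk x r)}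

/-- A function is Clarke regular at `x` if its epigraph is Clarke regular at `(x, f x)`. -/
def ClarkeRegularFn (f : H → EReal) (x : H) : Prop :=
  ∃ r : ℝ, f x = (r : EReal) ∧ ClarkeRegularAt (epigraph f) (pmk x r)

/-- `M` is identifiable at `xb` for `vb` relative to the function `f` with
subdifferential mapping `D`: for every sequence `(xᵢ, f xᵢ, vᵢ) → (xb, f xb, vb)`
with `vᵢ ∈ D xᵢ`, the points `xᵢ` lie in `M` for all large `i`. -/
def IdentifiableFn (f : H → EReal) (D : H → Set H) (M : Set H) (xb vb : H) : Prop :=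
  ∀ xs vs : ℕ → H, Tendsto xs atTop (𝓝 xb) →
    Tendsto (fun i => f (xs i)) atTop (𝓝 (f xb)) →
    Tendsto vs atTop (𝓝 vb) → (∀ i, vs i ∈ D (xs i)) →
    ∀ᶠ i in atTop, xs i ∈ M

/-- `M` is a locally minimal identifiable set relative to `f` (with subdifferential `D`). -/
def LocallyMinimalIdentifiableFn (f : H → EReal) (D : H → Set H) (M : Set H)
    (xb vb : H) : Prop :=
  IdentifiableFn f D M xb vb ∧ ∀ M' : Set H, IdentifiableFn f D M' xb vb → LocallyIncl M M' xb

/-- The subdifferential of convex analysis for an extended-real-valued function. -/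
def convexSubdiff (f : H → EReal) (x : H) : Set H :=
  {v | ∃ r : ℝ, f x = (r : EReal) ∧ ∀ y : H, ((r + ⟪v, y - x⟫ : ℝ) : EReal) ≤ f y}

/-- Convexity for an extended-real-valued function. -/
def ERealConvexOn (f : H → EReal) : Prop :=
  ∀ x y : H, ∀ a b : ℝ, 0 ≤ a → 0 ≤ b → a + b = 1 →
    f (a • x + b • y) ≤ (a : EReal) * f x + (b : EReal) * f y

/-- A piecewise linear-quadratic function: its domain is the union of finitely many
convex polyhedra, on each of which it agrees with a polynomial of degree at most 2. -/
def IsPiecewiseLinearQuadratic (f : H → EReal) : Prop :=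
  ∃ (k : ℕ) (C : Fin k → Set H), (∀ i, IsPolyhedron (C i)) ∧
    ({x | f x ≠ ⊤} = ⋃ i, C i) ∧
    ∀ i, ∃ (B : H →ₗ[ℝ] H →ₗ[ℝ] ℝ) (l : H →ₗ[ℝ] ℝ) (c : ℝ),
      ∀ x ∈ C i, f x = ((B x x + l x + c : ℝ) : EReal)


/-- Outer semicontinuity of a set-valued mapping (at every point). -/
def OuterSemicontinuousSV (G : H → Set H') : Prop :=
  ∀ (x : H) (v : H') (xs : ℕ → H) (vs : ℕ → H'),
    Tendsto xs atTop (𝓝 x) → Tendsto vs atTop (𝓝 v) →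
    (∀ i, vs i ∈ G (xs i)) → v ∈ G x

end Defs

section Aux

variable {H : Type*} [NormedAddCommGroup H] [InnerProductSpace ℝ H]

lemma aux_le_zero_of_forall_pos {a b : ℝ} (hb : 0 ≤ b) (h : ∀ ε > (0:ℝ), a ≤ ε * b) : a ≤ 0 := by
  refine le_of_forall_pos_le_add fun ε hε => ?_
  have h1 := h (ε / (b + 1)) (by positivity)
  have h2 : ε / (b + 1) * b ≤ ε := by
    rw [div_mul_eq_mul_div, div_le_iff₀ (by positivity)]
    nlinarith
  linarith

lemma aux_frechet_inner_seq_le {Q : Set H} {xb v w : H} (hv : v ∈ frechetNormalCone Q xb)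
    {xs : ℕ → H} {ts : ℕ → ℝ} (hxs : ∀ i, xs i ∈ Q) (hts : ∀ i, 0 < ts i)
    (hx : Tendsto xs atTop (𝓝 xb))
    (hw : Tendsto (fun i => (ts i)⁻¹ • (xs i - xb)) atTop (𝓝 w)) :
    ⟪v, w⟫ ≤ 0 := by
  refine aux_le_zero_of_forall_pos (norm_nonneg w) fun ε hε => ?_
  obtain ⟨δ, hδ, hQ⟩ := hv.2 ε hε
  have hev : ∀ᶠ i in atTop,
      ⟪v, (ts i)⁻¹ • (xs i - xb)⟫ ≤ ε * ‖(ts i)⁻¹ • (xs i - xb)‖ := by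
    filter_upwards [hx (Metric.ball_mem_nhds xb hδ)] with i hi
    have h1 := hQ (xs i) (hxs i) (Metric.mem_ball.mp hi)
    have hc : (0:ℝ) ≤ (ts i)⁻¹ := inv_nonneg.2 (hts i).le
    rw [real_inner_smul_right, norm_smul, Real.norm_eq_abs, abs_of_nonneg hc]
    calc (ts i)⁻¹ * ⟪v, xs i - xb⟫ ≤ (ts i)⁻¹ * (ε * ‖xs i - xb‖) :=
          mul_le_mul_of_nonneg_left h1 hc
      _ = ε * ((ts i)⁻¹ * ‖xs i - xb‖) := by ring
  exact le_of_tendsto_of_tendsto (tendsto_const_nhds.inner hw) (hw.norm.const_mul ε) hev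

lemma aux_frechet_subset_limiting {Q : Set H} {x v : H} (hv : v ∈ frechetNormalCone Q x) :
    v ∈ limitingNormalCone Q x :=
  ⟨fun _ => x, fun _ => v, fun _ => hv, tendsto_const_nhds, tendsto_const_nhds⟩

lemma aux_frechet_mono {M Q : Set H} (hMQ : M ⊆ Q) {x v : H} (hx : x ∈ M)
    (hv : v ∈ frechetNormalCone Q x) : v ∈ frechetNormalCone M x := by
  refine ⟨hx, fun ε hε => ?_⟩
  obtain ⟨δ, hδ, h⟩ := hv.2 ε hε
  exact ⟨δ, hδ, fun y hy => h y (hMQ hy)⟩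

lemma aux_frechet_smul {Q : Set H} {x v : H} {c : ℝ} (hc : 0 < c)
    (hv : v ∈ frechetNormalCone Q x) : c • v ∈ frechetNormalCone Q x := by
  refine ⟨hv.1, fun ε hε => ?_⟩
  obtain ⟨δ, hδ, h⟩ := hv.2 (ε / c) (by positivity)
  refine ⟨δ, hδ, fun y hy hyd => ?_⟩
  have h1 := h y hy hyd
  rw [real_inner_smul_left]
  have h2 : c * ⟪v, y - x⟫ ≤ c * (ε / c * ‖y - x‖) := mul_le_mul_of_nonneg_left h1 hc.le
  have h3 : c * (ε / c * ‖y - x‖) = ε * ‖y - x‖ := by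
    field_simp
  linarith

lemma aux_frechet_combo {Q : Set H} {x v₁ v₂ : H} {a b : ℝ} (ha : 0 ≤ a) (hb : 0 ≤ b)
    (hab : a + b = 1) (h₁ : v₁ ∈ frechetNormalCone Q x) (h₂ : v₂ ∈ frechetNormalCone Q x) :
    a • v₁ + b • v₂ ∈ frechetNormalCone Q x := by
  refine ⟨h₁.1, fun ε hε => ?_⟩
  obtain ⟨δ₁, hδ₁, g₁⟩ := h₁.2 ε hε
  obtain ⟨δ₂, hδ₂, g₂⟩ := h₂.2 ε hε
  refine ⟨min δ₁ δ₂, lt_min hδ₁ hδ₂, fun y hy hyd => ?_⟩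
  have e₁ := g₁ y hy (hyd.trans_le (min_le_left _ _))
  have e₂ := g₂ y hy (hyd.trans_le (min_le_right _ _))
  rw [inner_add_left, real_inner_smul_left, real_inner_smul_left]
  have h3 : a * (ε * ‖y - x‖) + b * (ε * ‖y - x‖) = ε * ‖y - x‖ := by
    have h4 : a * (ε * ‖y - x‖) + b * (ε * ‖y - x‖) = (a + b) * (ε * ‖y - x‖) := by ring
    rw [h4, hab, one_mul]
  linarith [mul_le_mul_of_nonneg_left e₁ ha, mul_le_mul_of_nonneg_left e₂ hb]

lemma aux_tangent_smul {M : Set H} {xb w : H} {c : ℝ} (hc : 0 < c)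
    (hw : w ∈ tangentConeB M xb) : c • w ∈ tangentConeB M xb := by
  obtain ⟨xs, ts, hxs, hts, hts0, hx, hlim⟩ := hw
  refine ⟨xs, fun i => c⁻¹ * ts i, hxs, fun i => mul_pos (inv_pos.2 hc) (hts i),
    by simpa using hts0.const_mul c⁻¹, hx, ?_⟩
  have he : ∀ i, ((c⁻¹ * ts i)⁻¹ : ℝ) • (xs i - xb) = c • ((ts i)⁻¹ • (xs i - xb)) := by
    intro i
    rw [mul_inv, inv_inv, mul_smul]
  simp only [he]
  exact hlim.const_smul c

lemma aux_zero_mem_tangent {M : Set H} {xb : H} (hx : xb ∈ M) :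
    (0:H) ∈ tangentConeB M xb := by
  refine ⟨fun _ => xb, fun i => 1 / ((i : ℝ) + 1), fun _ => hx,
    fun i => by show (0:ℝ) < 1 / ((i : ℝ) + 1); positivity,
    tendsto_one_div_add_atTop_nhds_zero_nat, tendsto_const_nhds, ?_⟩
  simp only [sub_self, smul_zero]
  exact tendsto_const_nhds

lemma aux_inner_vb_tangent_nonneg {Q M : Set H} {xb vb w : H}
    (hMQ : M ⊆ Q) (hxbM : xb ∈ M)
    (hmin : LocallyMinimalIdentifiableIn Q M xb vb)
    (hprox : ProxRegularAt M xb vb)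
    (hw : w ∈ tangentConeB M xb) : 0 ≤ ⟪vb, w⟫ := by
  obtain ⟨xs, ts, hxsM, hts, hts0, hxs, hlim⟩ := hw
  obtain ⟨⟨W, hW, hWid⟩, hminimal⟩ := hmin
  obtain ⟨ρ, hρ, hball⟩ := Metric.mem_nhds_iff.1 hW
  obtain ⟨-, εp, hεp, r, hr, hP⟩ := hprox
  have hident : ∀ y v : H, dist y xb < ρ → dist v vb < ρ → y ∈ Q →
      v ∈ limitingNormalCone Q y → y ∈ M := by
    intro y v h1 h2 hyQ hvN
    exact hWid (y, v) (hball (by rw [Metric.mem_ball, Prod.dist_eq]; exact max_lt h1 h2)) hyQ hvN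
  refine le_of_forall_pos_le_add fun c hc => ?_
  set δ := min (min (ρ/2) (εp/2)) (c/(‖w‖+1)) with hδdef
  have hδ : 0 < δ :=
    lt_min (lt_min (by positivity) (by positivity)) (by positivity)
  have hid' : IdentifiableIn Q {x | ∃ v, v ∈ limitingNormalCone Q x ∧ dist v vb < δ} xb vb := by
    refine ⟨(univ : Set H) ×ˢ Metric.ball vb δ,
      prod_mem_nhds univ_mem (Metric.ball_mem_nhds _ hδ), ?_⟩
    rintro ⟨y, v⟩ hp _ hv
    exact ⟨v, hv, Metric.mem_ball.mp hp.2⟩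
  obtain ⟨U, hU, hMU⟩ := hminimal _ hid'
  have hev1 : ∀ᶠ i in atTop, xs i ∈ U := hxs hU
  have hρεp : (0:ℝ) < min (ρ/2) εp := lt_min (by positivity) hεp
  have hev2 : ∀ᶠ i in atTop, dist (xs i) xb < min (ρ/2) εp := by
    filter_upwards [hxs (Metric.ball_mem_nhds xb hρεp)] with i hi
    exact Metric.mem_ball.mp hi
  have key : ∀ᶠ i in atTop,
      -(r/2) * ‖xs i - xb‖ * ‖(ts i)⁻¹ • (xs i - xb)‖ - δ * ‖(ts i)⁻¹ • (xs i - xb)‖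
        ≤ ⟪vb, (ts i)⁻¹ • (xs i - xb)⟫ := by
    filter_upwards [hev1, hev2] with i hiU hid
    have hxM := hxsM i
    obtain ⟨v, hvNQ, hvd⟩ : ∃ v, v ∈ limitingNormalCone Q (xs i) ∧ dist v vb < δ :=
      (hMU ⟨hxM, hiU⟩).1
    obtain ⟨ps, us, hus, hps, husv⟩ := hvNQ
    have hxρ : dist (xs i) xb < ρ/2 := lt_of_lt_of_le hid (min_le_left _ _)
    have hδρ : δ ≤ ρ/2 := le_trans (min_le_left _ _) (min_le_left _ _)
    have hev3 : ∀ᶠ j in atTop, dist (ps j) xb < ρ ∧ dist (us j) vb < ρ := by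
      have l1 : Tendsto (fun j => dist (ps j) xb) atTop (𝓝 (dist (xs i) xb)) :=
        hps.dist tendsto_const_nhds
      have l2 : Tendsto (fun j => dist (us j) vb) atTop (𝓝 (dist v vb)) :=
        husv.dist tendsto_const_nhds
      exact (l1.eventually_lt_const (by linarith)).and
        (l2.eventually_lt_const (by linarith))
    obtain ⟨J, hJ⟩ := eventually_atTop.1 hev3
    have hvM : v ∈ limitingNormalCone M (xs i) := by
      refine ⟨fun j => ps (j + J), fun j => us (j + J), fun j => ?_, ?_, ?_⟩
      · have hj := hJ (j + J) (Nat.le_add_left J j)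
        have hpm : ps (j + J) ∈ M :=
          hident _ _ hj.1 hj.2 (hus (j + J)).1 (aux_frechet_subset_limiting (hus (j + J)))
        exact aux_frechet_mono hMQ hpm (hus (j + J))
      · exact (tendsto_add_atTop_iff_nat J).2 hps
      · exact (tendsto_add_atTop_iff_nat J).2 husv
    have hδεp : δ < εp := by
      have h1 : δ ≤ εp/2 := le_trans (min_le_left _ _) (min_le_right _ _)
      linarith
    have hup := hP (xs i) hxM v hvM (lt_of_lt_of_le hid (min_le_right _ _)) (hvd.trans hδεp)
    have hkey : -(r/2) * ‖xs i - xb‖^2 ≤ ⟪v, xs i - xb⟫ := by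
      by_cases hxx : xs i = xb
      · simp [hxx]
      · have hne : xb ≠ xs i := fun h => hxx h.symm
        have h2 := hup.2 xb ⟨hxbM, Metric.mem_closedBall_self hεp.le⟩ hne
        rw [dist_eq_norm, dist_eq_norm] at h2
        have e1 : xs i + r⁻¹ • v - xs i = r⁻¹ • v := by abel
        have e2 : xs i + r⁻¹ • v - xb = (xs i - xb) + r⁻¹ • v := by abel
        rw [e1, e2] at h2
        have h3 : ‖r⁻¹ • v‖^2 < ‖(xs i - xb) + r⁻¹ • v‖^2 := by
          nlinarith [norm_nonneg (r⁻¹ • v), norm_nonneg ((xs i - xb) + r⁻¹ • v)]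
        rw [norm_add_sq_real] at h3
        have h4 : 0 < ‖xs i - xb‖^2 + 2 * ⟪xs i - xb, r⁻¹ • v⟫ := by linarith
        rw [real_inner_smul_right] at h4
        have hcm : ⟪xs i - xb, v⟫ = ⟪v, xs i - xb⟫ := real_inner_comm _ _
        rw [hcm] at h4
        have h6 : r * (r⁻¹ * ⟪v, xs i - xb⟫) = ⟪v, xs i - xb⟫ := by
          rw [← mul_assoc, mul_inv_cancel₀ hr.ne', one_mul]
        nlinarith [mul_pos hr h4, h6]
    have hti : 0 < (ts i)⁻¹ := inv_pos.2 (hts i)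
    have hnorm : ‖(ts i)⁻¹ • (xs i - xb)‖ = (ts i)⁻¹ * ‖xs i - xb‖ := by
      rw [norm_smul, Real.norm_eq_abs, abs_of_pos hti]
    have hsplit : ⟪vb, (ts i)⁻¹ • (xs i - xb)⟫
        = ⟪v, (ts i)⁻¹ • (xs i - xb)⟫ + ⟪vb - v, (ts i)⁻¹ • (xs i - xb)⟫ := by
      rw [← inner_add_left]
      congr 1
      abel
    have h5 : -(r/2) * ‖xs i - xb‖ * ‖(ts i)⁻¹ • (xs i - xb)‖
        ≤ ⟪v, (ts i)⁻¹ • (xs i - xb)⟫ := by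
      rw [real_inner_smul_right, hnorm]
      nlinarith [mul_le_mul_of_nonneg_left hkey hti.le]
    have h6 : -(δ * ‖(ts i)⁻¹ • (xs i - xb)‖) ≤ ⟪vb - v, (ts i)⁻¹ • (xs i - xb)⟫ := by
      have habs := abs_real_inner_le_norm (vb - v) ((ts i)⁻¹ • (xs i - xb))
      have hd : ‖vb - v‖ < δ := by
        rw [← dist_eq_norm, dist_comm]
        exact hvd
      have hnn := norm_nonneg ((ts i)⁻¹ • (xs i - xb))
      nlinarith [neg_abs_le ⟪vb - v, (ts i)⁻¹ • (xs i - xb)⟫]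
    linarith
  have lA : Tendsto (fun i => ⟪vb, (ts i)⁻¹ • (xs i - xb)⟫) atTop (𝓝 ⟪vb, w⟫) :=
    tendsto_const_nhds.inner hlim
  have hxn : Tendsto (fun i => ‖xs i - xb‖) atTop (𝓝 0) := by
    have := (hxs.sub (tendsto_const_nhds : Tendsto (fun _ : ℕ => xb) atTop (𝓝 xb))).norm
    simpa using this
  have lB : Tendsto
      (fun i => -(r/2) * ‖xs i - xb‖ * ‖(ts i)⁻¹ • (xs i - xb)‖
        - δ * ‖(ts i)⁻¹ • (xs i - xb)‖) atTop (𝓝 (-(r/2) * 0 * ‖w‖ - δ * ‖w‖)) :=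
    ((hxn.const_mul (-(r/2))).mul hlim.norm).sub (hlim.norm.const_mul δ)
  have hfin : -(r/2) * 0 * ‖w‖ - δ * ‖w‖ ≤ ⟪vb, w⟫ := le_of_tendsto_of_tendsto lB lA key
  have hδw : δ * ‖w‖ ≤ c := by
    have hδle : δ ≤ c/(‖w‖+1) := min_le_right _ _
    have h1 : δ * ‖w‖ ≤ c/(‖w‖+1) * ‖w‖ := mul_le_mul_of_nonneg_right hδle (norm_nonneg w)
    have h2 : c/(‖w‖+1) * ‖w‖ ≤ c := by
      rw [div_mul_eq_mul_div, div_le_iff₀ (by positivity)]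
      nlinarith [norm_nonneg w]
    linarith
  nlinarith [hfin]

end Aux

set_option maxHeartbeats 2000000 in
/-- Critical cones as tangential approximations. -/
theorem statement15 {n : ℕ} (Q : Set (Euc n)) (xb : Euc n)
    (hreg : ClarkeRegularAt Q xb) (vb : Euc n) (hvb : vb ∈ limitingNormalCone Q xb)
    (M : Set (Euc n)) (hMQ : M ⊆ Q) (hxbM : xb ∈ M)
    (hmin : LocallyMinimalIdentifiableIn Q M xb vb)
    (hprox : ProxRegularAt M xb vb) (hder : SmoothlyDerivableAt M xb) :
    closure (convexHull ℝ (tangentConeB M xb)) =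
      limitingNormalCone (limitingNormalCone Q xb) vb := by
  classical
  have hNf : limitingNormalCone Q xb = frechetNormalCone Q xb := hreg.2
  set N := limitingNormalCone Q xb with hNdef
  set K := {w : Euc n | ∀ y ∈ N, ⟪w, y - vb⟫ ≤ 0} with hKdef
  have hvbf : vb ∈ frechetNormalCone Q xb := hNf ▸ hvb
  -- RHS = K
  have hRHS : limitingNormalCone N vb = K := by
    apply Subset.antisymm
    · rintro w ⟨ys, vs, hvs, hys, hvsw⟩ y hy
      have hyf : y ∈ N := hy
      have hstep : ∀ j, ⟪vs j, y - ys j⟫ ≤ 0 := by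
        intro j
        have hyjN : ys j ∈ N := (hvs j).1
        refine aux_le_zero_of_forall_pos (b := ‖y - ys j‖) (norm_nonneg _) fun ε hε => ?_
        obtain ⟨δ, hδ, hg⟩ := (hvs j).2 ε hε
        set t := min 1 (δ / (2 * (‖y - ys j‖ + 1))) with htdef
        have ht0 : 0 < t := lt_min one_pos (by positivity)
        have ht1 : t ≤ 1 := min_le_left _ _
        have hmem : ys j + t • (y - ys j) ∈ N := by
          have he : ys j + t • (y - ys j) = (1 - t) • ys j + t • y := by
            rw [smul_sub, sub_smul, one_smul]; abel
          rw [he]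
          show (1 - t) • ys j + t • y ∈ N
          rw [hNf]
          exact aux_frechet_combo (by linarith) ht0.le (by ring) (hNf ▸ hyjN) (hNf ▸ hyf)
        have hdist : dist (ys j + t • (y - ys j)) (ys j) < δ := by
          rw [dist_eq_norm, add_sub_cancel_left, norm_smul, Real.norm_eq_abs, abs_of_pos ht0]
          have h1 : t ≤ δ / (2 * (‖y - ys j‖ + 1)) := min_le_right _ _
          calc t * ‖y - ys j‖ ≤ δ / (2 * (‖y - ys j‖ + 1)) * ‖y - ys j‖ :=
                mul_le_mul_of_nonneg_right h1 (norm_nonneg _)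
            _ < δ := by
                rw [div_mul_eq_mul_div, div_lt_iff₀ (by positivity)]
                nlinarith [norm_nonneg (y - ys j)]
        have h2 := hg _ hmem hdist
        rw [add_sub_cancel_left, real_inner_smul_right, norm_smul, Real.norm_eq_abs,
          abs_of_pos ht0] at h2
        nlinarith [h2, ht0]
      have hl : Tendsto (fun j => ⟪vs j, y - ys j⟫) atTop (𝓝 ⟪w, y - vb⟫) :=
        hvsw.inner (tendsto_const_nhds.sub hys)
      exact le_of_tendsto hl (Eventually.of_forall hstep)
    · intro w hw
      refine aux_frechet_subset_limiting ⟨hvb, fun ε hε => ⟨1, one_pos, fun y hy _ => ?_⟩⟩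
      have h1 : ⟪w, y - vb⟫ ≤ 0 := hw y hy
      have h2 : (0:ℝ) ≤ ε * ‖y - vb‖ := mul_nonneg hε.le (norm_nonneg _)
      linarith
  -- tangent cone ⊆ K
  have hTK : tangentConeB M xb ⊆ K := by
    rintro w hw y hy
    obtain ⟨xs, ts, hxsM, hts, hts0, hxsl, hlim⟩ := hw
    have h1 : ⟪y, w⟫ ≤ 0 :=
      aux_frechet_inner_seq_le (hNf ▸ hy) (fun i => hMQ (hxsM i)) hts hxsl hlim
    have h2 : 0 ≤ ⟪vb, w⟫ :=
      aux_inner_vb_tangent_nonneg hMQ hxbM hmin hprox ⟨xs, ts, hxsM, hts, hts0, hxsl, hlim⟩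
    have c1 : ⟪w, y⟫ = ⟪y, w⟫ := real_inner_comm _ _
    have c2 : ⟪w, vb⟫ = ⟪vb, w⟫ := real_inner_comm _ _
    rw [inner_sub_right]
    linarith
  have hKclosed : IsClosed K := by
    have he : K = ⋂ y ∈ N, {w : Euc n | ⟪w, y - vb⟫ ≤ 0} := by
      ext w
      simp only [hKdef, mem_setOf_eq, mem_iInter]
    rw [he]
    exact isClosed_biInter fun y _ =>
      isClosed_le (continuous_id.inner continuous_const) continuous_const
  have hKconv : Convex ℝ K := by
    intro w₁ h₁ w₂ h₂ a b ha hb hab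
    intro y hy
    rw [inner_add_left, real_inner_smul_left, real_inner_smul_left]
    nlinarith [mul_le_mul_of_nonneg_left (h₁ y hy) ha, mul_le_mul_of_nonneg_left (h₂ y hy) hb]
  have hLK : closure (convexHull ℝ (tangentConeB M xb)) ⊆ K :=
    closure_minimal (convexHull_min hTK hKconv) hKclosed
  -- hard direction : K ⊆ closure (convexHull ...)
  have hKL : K ⊆ closure (convexHull ℝ (tangentConeB M xb)) := by
    intro w hwK
    by_contra hnot
    obtain ⟨f, u₀, hfs, hfw⟩ := geometric_hahn_banach_closed_point
      ((convex_convexHull ℝ _).closure) isClosed_closure hnot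
    set z := (InnerProductSpace.toDual ℝ (Euc n)).symm f with hzdef
    have hzf : ∀ x : Euc n, ⟪z, x⟫ = f x := fun x => InnerProductSpace.toDual_symm_apply
    have hfpos : 0 < f w := by
      have h0 : (0 : Euc n) ∈ closure (convexHull ℝ (tangentConeB M xb)) :=
        subset_closure (subset_convexHull ℝ _ (aux_zero_mem_tangent hxbM))
      have h1 := hfs 0 h0
      simp only [map_zero] at h1
      linarith
    have hzw : 0 < ⟪z, w⟫ := by rw [hzf]; linarith [hfs]
    have hzT : ∀ t ∈ tangentConeB M xb, ⟪z, t⟫ ≤ 0 := by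
      intro t ht
      by_contra hpos
      push_neg at hpos
      set c := (|u₀| + 1) / ⟪z, t⟫ with hcdef
      have hcpos : 0 < c := div_pos (by positivity) hpos
      have hct := aux_tangent_smul hcpos ht
      have h1 := hfs _ (subset_closure (subset_convexHull ℝ _ hct))
      rw [← hzf (c • t), real_inner_smul_right, hcdef, div_mul_cancel₀ _ hpos.ne'] at h1
      linarith [le_abs_self u₀]
    -- identifiability window
    obtain ⟨⟨W, hW, hWid⟩, -⟩ := hmin
    obtain ⟨ρ, hρ, hball⟩ := Metric.mem_nhds_iff.1 hW
    have hident : ∀ y v : Euc n, dist y xb < ρ → dist v vb < ρ → y ∈ Q →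
        v ∈ limitingNormalCone Q y → y ∈ M := by
      intro y v h1 h2 hyQ hvN
      exact hWid (y, v) (hball (by rw [Metric.mem_ball, Prod.dist_eq]; exact max_lt h1 h2)) hyQ hvN
    obtain ⟨⟨ε₀, hε₀, hQc⟩, -⟩ := hreg
    set s := ρ / (4 * (‖z‖ + 1)) with hsdef
    have hs : 0 < s := by positivity
    have hsz : s * ‖z‖ < ρ / 4 := by
      rw [hsdef, div_mul_eq_mul_div, div_lt_div_iff₀ (by positivity) (by positivity)]
      nlinarith [norm_nonneg z]
    set u := vb + s • z with hudef
    set τ : ℕ → ℝ := fun i => (ε₀ / (2 * ‖u‖ + 1)) * (1 / ((i : ℝ) + 1)) with hτdef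
    have hτpos : ∀ i, 0 < τ i := fun i => by
      show (0:ℝ) < (ε₀ / (2 * ‖u‖ + 1)) * (1 / ((i : ℝ) + 1)); positivity
    have hτlt : ∀ i, 2 * (τ i * ‖u‖) < ε₀ := by
      intro i
      have h1 : (1 : ℝ) / ((i : ℝ) + 1) ≤ 1 := by
        rw [div_le_one (by positivity)]; linarith [Nat.cast_nonneg (α := ℝ) i]
      have h2 : τ i ≤ ε₀ / (2 * ‖u‖ + 1) := by
        calc τ i ≤ (ε₀ / (2 * ‖u‖ + 1)) * 1 := by
              exact mul_le_mul_of_nonneg_left h1 (by positivity)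
          _ = ε₀ / (2 * ‖u‖ + 1) := mul_one _
      have h3 : ε₀ / (2 * ‖u‖ + 1) * (2 * ‖u‖) < ε₀ := by
        rw [div_mul_eq_mul_div, div_lt_iff₀ (by positivity)]
        nlinarith [norm_nonneg u]
      nlinarith [norm_nonneg u, hτpos i]
    have hτ0 : Tendsto τ atTop (𝓝 0) := by
      rw [hτdef]
      have := tendsto_one_div_add_atTop_nhds_zero_nat.const_mul (ε₀ / (2 * ‖u‖ + 1))
      simpa using this
    set S := Q ∩ Metric.closedBall xb ε₀ with hSdef
    have hScpt : IsCompact S :=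
      (isCompact_closedBall xb ε₀).of_isClosed_subset hQc inter_subset_right
    have hxbQ : xb ∈ Q := hvbf.1
    have hxbS : xb ∈ S := ⟨hxbQ, Metric.mem_closedBall_self hε₀.le⟩
    have hproj : ∀ i, ∃ y ∈ S, ∀ y' ∈ S, dist (xb + τ i • u) y ≤ dist (xb + τ i • u) y' := by
      intro i
      obtain ⟨y, hyS, hymin⟩ := hScpt.exists_isMinOn ⟨xb, hxbS⟩
        ((continuous_const.dist continuous_id).continuousOn)
      exact ⟨y, hyS, fun y' hy' => hymin hy'⟩
    choose y hyS hymin using hproj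
    have hyQ : ∀ i, y i ∈ Q := fun i => (hyS i).1
    have hdistp : ∀ i, dist (xb + τ i • u) (y i) ≤ τ i * ‖u‖ := by
      intro i
      have h1 := hymin i xb hxbS
      have h2 : dist (xb + τ i • u) xb = τ i * ‖u‖ := by
        rw [dist_eq_norm, add_sub_cancel_left, norm_smul, Real.norm_eq_abs,
          abs_of_pos (hτpos i)]
      linarith
    have hdy : ∀ i, ‖y i - xb‖ ≤ 2 * (τ i * ‖u‖) := by
      intro i
      have h1 := hdistp i
      rw [dist_eq_norm] at h1
      calc ‖y i - xb‖ = ‖(y i - (xb + τ i • u)) + τ i • u‖ := by congr 1; abel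
        _ ≤ ‖y i - (xb + τ i • u)‖ + ‖τ i • u‖ := norm_add_le _ _
        _ ≤ τ i * ‖u‖ + τ i * ‖u‖ := by
            rw [norm_sub_rev]
            rw [norm_smul, Real.norm_eq_abs, abs_of_pos (hτpos i)]
            linarith
        _ = 2 * (τ i * ‖u‖) := by ring
    set h : ℕ → Euc n := fun i => (τ i)⁻¹ • (y i - xb) with hhdef
    have hhb : ∀ i, h i ∈ Metric.closedBall (0 : Euc n) (2 * ‖u‖) := by
      intro i
      rw [Metric.mem_closedBall, dist_zero_right]
      show ‖(τ i)⁻¹ • (y i - xb)‖ ≤ 2 * ‖u‖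
      rw [norm_smul, Real.norm_eq_abs, abs_of_pos (inv_pos.2 (hτpos i))]
      have h1 := hdy i
      have h2 : (τ i)⁻¹ * ‖y i - xb‖ ≤ (τ i)⁻¹ * (2 * (τ i * ‖u‖)) :=
        mul_le_mul_of_nonneg_left h1 (inv_pos.2 (hτpos i)).le
      have h3 : (τ i)⁻¹ * (2 * (τ i * ‖u‖)) = 2 * ‖u‖ := by
        rw [mul_left_comm, inv_mul_cancel_left₀ (hτpos i).ne']
      linarith
    obtain ⟨d, -, φ, hφ, hhd⟩ := tendsto_subseq_of_bounded Metric.isBounded_closedBall hhb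
    have hkey : ∀ i, ‖h i‖^2 ≤ 2 * ⟪u, h i⟫ := by
      intro i
      have h1 := hdistp i
      have e : xb + τ i • u - y i = τ i • (u - h i) := by
        have e0 : τ i • h i = y i - xb := smul_inv_smul₀ (hτpos i).ne' _
        have e1 : τ i • (u - h i) = τ i • u - (y i - xb) := by
          rw [smul_sub, e0]
        rw [e1]; abel
      rw [dist_eq_norm, e, norm_smul, Real.norm_eq_abs, abs_of_pos (hτpos i)] at h1
      have h3 : ‖u - h i‖ ≤ ‖u‖ := le_of_mul_le_mul_left h1 (hτpos i)
      have h4 : ‖u - h i‖^2 ≤ ‖u‖^2 := by nlinarith [norm_nonneg (u - h i), norm_nonneg u]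
      have h5 := norm_sub_sq_real u (h i)
      nlinarith
    have hyball : ∀ i, ‖y i - xb‖ < ε₀ := fun i => lt_of_le_of_lt (hdy i) (hτlt i)
    have hfre : ∀ i, (xb + τ i • u - y i) ∈ frechetNormalCone Q (y i) := by
      intro i
      refine ⟨hyQ i, fun ε hε => ?_⟩
      refine ⟨min (ε₀ - ‖y i - xb‖) (2 * ε),
        lt_min (by linarith [hyball i]) (by positivity), fun y' hy' hyd => ?_⟩
      have hy'S : y' ∈ S := by
        refine ⟨hy', ?_⟩
        rw [Metric.mem_closedBall]
        have h1 : dist y' xb ≤ dist y' (y i) + dist (y i) xb := dist_triangle _ _ _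
        have h2 : dist y' (y i) < ε₀ - ‖y i - xb‖ := hyd.trans_le (min_le_left _ _)
        have h3 : dist (y i) xb = ‖y i - xb‖ := dist_eq_norm _ _
        linarith
      have hmin' := hymin i y' hy'S
      have e2 : xb + τ i • u - y' = (xb + τ i • u - y i) - (y' - y i) := by abel
      rw [dist_eq_norm, dist_eq_norm, e2] at hmin'
      have hsq : ‖xb + τ i • u - y i‖^2 ≤ ‖(xb + τ i • u - y i) - (y' - y i)‖^2 := by
        nlinarith [norm_nonneg (xb + τ i • u - y i),
          norm_nonneg ((xb + τ i • u - y i) - (y' - y i))]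
      have hexp := norm_sub_sq_real (xb + τ i • u - y i) (y' - y i)
      have hhalf : ⟪xb + τ i • u - y i, y' - y i⟫ ≤ (1/2) * ‖y' - y i‖^2 := by linarith
      have hlt : ‖y' - y i‖ ≤ 2 * ε := by
        rw [← dist_eq_norm]
        exact (hyd.trans_le (min_le_right _ _)).le
      nlinarith [norm_nonneg (y' - y i)]
    have hτφ : Tendsto (fun i => τ (φ i)) atTop (𝓝 0) := hτ0.comp hφ.tendsto_atTop
    have hyφ : Tendsto (fun i => y (φ i)) atTop (𝓝 xb) := by
      rw [tendsto_iff_norm_sub_tendsto_zero]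
      have hb2 : Tendsto (fun i => 2 * (τ (φ i) * ‖u‖)) atTop (𝓝 0) := by
        have := (hτφ.mul_const ‖u‖).const_mul 2
        simpa using this
      exact squeeze_zero (fun i => norm_nonneg _) (fun i => hdy (φ i)) hb2
    have hginv : ∀ i, (τ i)⁻¹ • (xb + τ i • u - y i) = u - h i := by
      intro i
      have e1 : xb + τ i • u - y i = τ i • u - (y i - xb) := by abel
      rw [e1, smul_sub, inv_smul_smul₀ (hτpos i).ne']
    have hfre' : ∀ i, u - h i ∈ frechetNormalCone Q (y i) := by
      intro i
      have := aux_frechet_smul (inv_pos.2 (hτpos i)) (hfre i)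
      rwa [hginv i] at this
    have hvsg : Tendsto (fun i => u - h (φ i)) atTop (𝓝 (u - d)) :=
      tendsto_const_nhds.sub hhd
    have hgN : u - d ∈ N :=
      ⟨fun i => y (φ i), fun i => u - h (φ i), fun i => hfre' (φ i), hyφ, hvsg⟩
    have hvbd : ⟪vb, d⟫ ≤ 0 :=
      aux_frechet_inner_seq_le hvbf (fun i => hyQ (φ i)) (fun i => hτpos (φ i)) hyφ hhd
    have hd2 : ‖d‖^2 ≤ 2 * ⟪u, d⟫ := by
      have l1 : Tendsto (fun i => ‖h (φ i)‖^2) atTop (𝓝 (‖d‖^2)) := by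
        have := hhd.norm
        have := this.mul this
        simpa [pow_two] using this
      have l2 : Tendsto (fun i => 2 * ⟪u, h (φ i)⟫) atTop (𝓝 (2 * ⟪u, d⟫)) :=
        (tendsto_const_nhds.inner hhd).const_mul 2
      exact le_of_tendsto_of_tendsto l1 l2 (Eventually.of_forall fun i => hkey (φ i))
    have hinner_u : ⟪u, d⟫ = ⟪vb, d⟫ + s * ⟪z, d⟫ := by
      rw [hudef, inner_add_left, real_inner_smul_left]
    have hdsz : ‖d‖ ≤ 2 * (s * ‖z‖) := by
      have h2 : ⟪z, d⟫ ≤ ‖z‖ * ‖d‖ := real_inner_le_norm z d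
      rcases eq_or_lt_of_le (norm_nonneg d) with h0 | h0
      · rw [← h0]; positivity
      · have h3 : ‖d‖^2 ≤ 2 * (s * (‖z‖ * ‖d‖)) := by
          have h4 : s * ⟪z, d⟫ ≤ s * (‖z‖ * ‖d‖) := mul_le_mul_of_nonneg_left h2 hs.le
          linarith [hd2, hinner_u, hvbd]
        nlinarith [h3, h0]
    have hgvb : dist (u - d) vb < ρ := by
      rw [dist_eq_norm]
      have e3 : u - d - vb = s • z - d := by rw [hudef]; abel
      rw [e3]
      calc ‖s • z - d‖ ≤ ‖s • z‖ + ‖d‖ := norm_sub_le _ _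
        _ ≤ s * ‖z‖ + 2 * (s * ‖z‖) := by
            rw [norm_smul, Real.norm_eq_abs, abs_of_pos hs]
            linarith [hdsz]
        _ < ρ := by nlinarith [hsz]
    have hevM : ∀ᶠ i in atTop, y (φ i) ∈ M := by
      have l3 : Tendsto (fun i => dist (u - h (φ i)) vb) atTop (𝓝 (dist (u - d) vb)) :=
        hvsg.dist tendsto_const_nhds
      have l4 : Tendsto (fun i => dist (y (φ i)) xb) atTop (𝓝 0) := by
        have := hyφ.dist (tendsto_const_nhds : Tendsto (fun _ : ℕ => xb) atTop (𝓝 xb))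
        simpa using this
      filter_upwards [l3.eventually_lt_const hgvb, l4.eventually_lt_const hρ] with i h1 h2
      exact hident _ _ h2 h1 (hyQ (φ i)) (aux_frechet_subset_limiting (hfre' (φ i)))
    obtain ⟨I, hI⟩ := eventually_atTop.1 hevM
    have hdT : d ∈ tangentConeB M xb := by
      refine ⟨fun i => y (φ (i + I)), fun i => τ (φ (i + I)),
        fun i => hI _ (Nat.le_add_left I i), fun i => hτpos _, ?_, ?_, ?_⟩
      · exact (tendsto_add_atTop_iff_nat I).2 hτφ
      · exact (tendsto_add_atTop_iff_nat I).2 hyφ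
      · exact (tendsto_add_atTop_iff_nat I).2 hhd
    have hzd : ⟪z, d⟫ ≤ 0 := hzT d hdT
    have hd0 : d = 0 := by
      have h1 : ‖d‖^2 ≤ 0 := by nlinarith [hd2, hvbd, hzd, hs, hinner_u]
      have h2 : ‖d‖ = 0 := by nlinarith [norm_nonneg d]
      exact norm_eq_zero.1 h2
    have huN : u ∈ N := by
      have := hgN
      rw [hd0, sub_zero] at this
      exact this
    have hcontr := hwK u huN
    rw [hudef, add_sub_cancel_left, real_inner_smul_right] at hcontr
    have hcm : ⟪w, z⟫ = ⟪z, w⟫ := real_inner_comm _ _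
    nlinarith [hzw, hs, hcontr, hcm]
  rw [hRHS]
  exact Subset.antisymm hLK hKL
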